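/- (Lemma 5 of the paper.) Let DB be an uncertain database all of whose existential probabilities lie in [0,1], with each item x carrying a weight w(x) ∈ [0,1], and let minWES be a real number. Let α be a nonempty pattern and α' = α ++ β, where β is a (possibly empty) pattern each of whose items occurs in some sequence of the projected database DB|α. If wExpSup^cap(α) < minWES, then WES(α') < minWES; that is, if the value of wExpSup^cap for a pattern is below the threshold minWES, then the weighted expected support of that pattern and of all such super patterns must not satisfy the threshold. -/

import Mathlib

variable {I : Type*}

/-- An uncertain sequence: a finite list of (item, existential probability) pairs. -/
abbrev USeq (I : Type*) := List (I × ℝ)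

/-- An uncertain database: a finite list of uncertain sequences. -/
abbrev UDB (I : Type*) := List (USeq I)

/-- `α` occurs in `S`: some sublist of `S` has item list `α`. -/
def Occurs (α : List I) (S : USeq I) : Prop :=
  ∃ o : USeq I, o.Sublist S ∧ o.map Prod.fst = α

/-- Maximum occurrence probability of pattern `α` in `S`
(`0` if `α` has no occurrence in `S`; `1` for the empty pattern). -/
noncomputable def maxPrS [DecidableEq I] (α : List I) (S : USeq I) : ℝ :=
  WithBot.unbotD 0 (((S.sublists.filter fun o => decide (o.map Prod.fst = α)).map
      fun o => (o.map Prod.snd).prod).maximum)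

/-- Greedy projection: `projSeq α S = some S'` iff `α` occurs in `S`, in which case `S'`
is the suffix of `S` strictly after the last matched position of the greedy (leftmost)
occurrence of `α` in `S`.  For the empty pattern it is `S` itself. -/
def projSeq [DecidableEq I] : List I → USeq I → Option (USeq I)
  | [], S => some S
  | _ :: _, [] => none
  | i :: α, (x, _) :: rest =>
      if x = i then projSeq α rest else projSeq (i :: α) rest

/-- The projected database `DB|α`. -/
def projDB [DecidableEq I] (α : List I) (DB : UDB I) : UDB I :=
  DB.filterMap (projSeq α)

/-- `P̂_D(i)`: maximum probability of an entry with item `i` over all sequences of `D`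
(`0` if `i` occurs in no sequence of `D`). -/
noncomputable def Phat [DecidableEq I] (D : UDB I) (i : I) : ℝ :=
  WithBot.unbotD 0 (((D.flatten.filter fun e => decide (e.1 = i)).map Prod.snd).maximum)

/-- `maxPr(α)` relative to `DB`: the product of per-step maximum probabilities over the
successively projected databases. -/
noncomputable def maxPrDB [DecidableEq I] (DB : UDB I) (α : List I) : ℝ :=
  ∏ k : Fin α.length, Phat (projDB (α.take k.val) DB) (α.get k)

/-- Expected support of `α` in `DB`. -/
noncomputable def expSup [DecidableEq I] (DB : UDB I) (α : List I) : ℝ :=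
  (DB.map fun S => maxPrS α S).sum

/-- `expSup^cap` of a nonempty pattern (junk value `0` on the empty pattern). -/
noncomputable def expSupCap [DecidableEq I] (DB : UDB I) (α : List I) : ℝ :=
  match α.getLast? with
  | none => 0
  | some i =>
      maxPrDB DB α.dropLast *
        ((projDB α.dropLast DB).map fun S' => maxPrS [i] S').sum

/-- Number of sequences of `D` in which item `i` occurs. -/
def supCount [DecidableEq I] (D : UDB I) (i : I) : ℕ :=
  (D.filter fun S => decide (i ∈ S.map Prod.fst)).length

/-- `expSupport^top` of a nonempty pattern (junk value `0` on the empty pattern). -/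
noncomputable def expSupTop [DecidableEq I] (DB : UDB I) (α : List I) : ℝ :=
  match α.getLast? with
  | none => 0
  | some i =>
      maxPrDB DB α.dropLast * Phat (projDB α.dropLast DB) i *
        (supCount (projDB α.dropLast DB) i : ℝ)

/-- Item `i` occurs in some sequence of `D`. -/
def ItemOccursIn (D : UDB I) (i : I) : Prop :=
  ∃ S ∈ D, i ∈ S.map Prod.fst

/-- `sWeight`: average weight of the items of a pattern. -/
noncomputable def sWeight (w : I → ℝ) (α : List I) : ℝ :=
  (α.map w).sum / (α.length : ℝ)

/-- Maximum weight among the items of a pattern (`0` for the empty pattern). -/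
noncomputable def mxWs (w : I → ℝ) (α : List I) : ℝ :=
  WithBot.unbotD 0 ((α.map w).maximum)

/-- Maximum weight among items occurring in some sequence of `D` (`0` if none). -/
noncomputable def mxWDB (w : I → ℝ) (D : UDB I) : ℝ :=
  WithBot.unbotD 0 ((D.flatten.map fun e => w e.1).maximum)

/-- `wgt^cap`. -/
noncomputable def wgtCap [DecidableEq I] (DB : UDB I) (w : I → ℝ) (α : List I) : ℝ :=
  max (mxWDB w (projDB α.dropLast DB)) (mxWs w α)

/-- Weighted expected support. -/
noncomputable def WES [DecidableEq I] (DB : UDB I) (w : I → ℝ) (α : List I) : ℝ :=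
  expSup DB α * sWeight w α

/-- `wExpSup^cap`. -/
noncomputable def wExpSupCap [DecidableEq I] (DB : UDB I) (w : I → ℝ) (α : List I) : ℝ :=
  expSupCap DB α * wgtCap DB w α

section Helpers

lemma unbot'_max_nonneg {l : List ℝ} (h : ∀ x ∈ l, 0 ≤ x) : 0 ≤ WithBot.unbotD 0 l.maximum := by
  cases hm : l.maximum with
  | bot => simp
  | coe m => simpa using h m (List.maximum_mem hm)

lemma le_unbot'_max {l : List ℝ} {x : ℝ} (hx : x ∈ l) : x ≤ WithBot.unbotD 0 l.maximum := by
  cases hm : l.maximum with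
  | bot =>
    have := List.le_maximum_of_mem' hx
    rw [hm] at this
    exact absurd this (by simp)
  | coe m => simpa using List.le_maximum_of_mem hx hm

lemma unbot'_max_le {l : List ℝ} {c : ℝ} (hc : 0 ≤ c) (h : ∀ x ∈ l, x ≤ c) :
    WithBot.unbotD 0 l.maximum ≤ c := by
  cases hm : l.maximum with
  | bot => simpa using hc
  | coe m => simpa using h m (List.maximum_mem hm)

lemma prod_Icc01 : ∀ (l : List ℝ), (∀ x ∈ l, 0 ≤ x ∧ x ≤ 1) → 0 ≤ l.prod ∧ l.prod ≤ 1
  | [], _ => by simp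
  | x :: l, h => by
      obtain ⟨h0, h1⟩ := h x List.mem_cons_self
      obtain ⟨H0, H1⟩ := prod_Icc01 l (fun y hy => h y (List.mem_cons_of_mem _ hy))
      simp only [List.prod_cons]
      exact ⟨mul_nonneg h0 H0, by nlinarith⟩

variable [DecidableEq I]

lemma le_maxPrS {α : List I} {S o : USeq I} (ho : o.Sublist S) (hm : o.map Prod.fst = α) :
    (o.map Prod.snd).prod ≤ maxPrS α S := by
  apply le_unbot'_max
  simp only [List.mem_map, List.mem_filter, List.mem_sublists]
  exact ⟨o, ⟨ho, by simp [hm]⟩, rfl⟩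

lemma maxPrS_le {α : List I} {S : USeq I} {c : ℝ} (hc : 0 ≤ c)
    (h : ∀ o : USeq I, o.Sublist S → o.map Prod.fst = α → (o.map Prod.snd).prod ≤ c) :
    maxPrS α S ≤ c := by
  apply unbot'_max_le hc
  intro x hx
  simp only [List.mem_map, List.mem_filter, List.mem_sublists] at hx
  obtain ⟨o, ⟨ho, hmo⟩, rfl⟩ := hx
  exact h o ho (by simpa using hmo)

lemma maxPrS_nonneg {α : List I} {S : USeq I} (hS : ∀ e ∈ S, 0 ≤ e.2) : 0 ≤ maxPrS α S := by
  apply unbot'_max_nonneg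
  intro x hx
  simp only [List.mem_map, List.mem_filter, List.mem_sublists] at hx
  obtain ⟨o, ⟨ho, _⟩, rfl⟩ := hx
  refine List.prod_nonneg ?_
  intro a ha
  obtain ⟨e, he, rfl⟩ := List.mem_map.mp ha
  exact hS e (ho.subset he)

lemma projSeq_sublist : ∀ (γ : List I) (S T : USeq I), projSeq γ S = some T → T.Sublist S
  | [], S, T, h => by
      simp only [projSeq, Option.some.injEq] at h
      exact h ▸ List.Sublist.refl S
  | i :: γ, [], T, h => by simp [projSeq] at h
  | i :: γ, (x, p) :: rest, T, h => by
      by_cases hx : x = i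
      · simp only [projSeq, if_pos hx] at h
        exact (projSeq_sublist γ rest T h).cons _
      · simp only [projSeq, if_neg hx] at h
        exact (projSeq_sublist (i :: γ) rest T h).cons _

lemma projSeq_append : ∀ (γ δ : List I) (S : USeq I),
    projSeq (γ ++ δ) S = (projSeq γ S).bind (projSeq δ)
  | [], δ, S => by simp [projSeq]
  | i :: γ, δ, [] => by simp [projSeq]
  | i :: γ, δ, (x, p) :: rest => by
      by_cases hx : x = i
      · simp only [List.cons_append, projSeq, if_pos hx]
        exact projSeq_append γ δ rest
      · simp only [List.cons_append, projSeq, if_neg hx]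
        exact projSeq_append (i :: γ) δ rest

lemma projSeq_key (γ : List I) (S : USeq I) : ∀ (δ : List I) (o : USeq I),
    o.Sublist S → o.map Prod.fst = γ ++ δ →
    ∃ T, projSeq γ S = some T ∧ (o.drop γ.length).Sublist T := by
  induction S generalizing γ with
  | nil =>
    intro δ o ho hm
    have ho' : o = [] := List.sublist_nil.mp ho
    subst ho'
    cases γ with
    | nil => exact ⟨[], rfl, by simp⟩
    | cons i γ => simp at hm
  | cons a rest ih =>
    intro δ o ho hm
    cases γ with
    | nil => exact ⟨a :: rest, rfl, by simpa using ho⟩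
    | cons i γ =>
      obtain ⟨x, p⟩ := a
      cases ho with
      | cons _ ho' =>
        by_cases hx : x = i
        · cases o with
          | nil => simp at hm
          | cons e o' =>
            simp only [List.map_cons, List.cons_append, List.cons.injEq] at hm
            have ho'' : o'.Sublist rest := (List.sublist_cons_self e o').trans ho'
            obtain ⟨T, hT, hsub⟩ := ih γ δ o' ho'' hm.2
            exact ⟨T, by simp [projSeq, hx, hT], by simpa using hsub⟩
        · obtain ⟨T, hT, hsub⟩ := ih (i :: γ) δ o ho' hm
          exact ⟨T, by simp [projSeq, hx, hT], hsub⟩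
      | cons_cons _ ho' =>
        simp only [List.map_cons, List.cons_append, List.cons.injEq] at hm
        obtain ⟨T, hT, hsub⟩ := ih γ δ _ ho' hm.2
        refine ⟨T, by simp [projSeq, hm.1, hT], by simpa using hsub⟩

lemma le_Phat {D : UDB I} {T : USeq I} {e : I × ℝ} (hT : T ∈ D) (he : e ∈ T) :
    e.2 ≤ Phat D e.1 := by
  apply le_unbot'_max
  simp only [List.mem_map, List.mem_filter]
  exact ⟨e, ⟨List.mem_flatten.mpr ⟨T, hT, he⟩, by simp⟩, rfl⟩

lemma Phat_nonneg {D : UDB I} (h : ∀ T ∈ D, ∀ e ∈ T, 0 ≤ e.2) (i : I) : 0 ≤ Phat D i := by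
  apply unbot'_max_nonneg
  intro x hx
  simp only [List.mem_map, List.mem_filter] at hx
  obtain ⟨e, ⟨hef, _⟩, rfl⟩ := hx
  obtain ⟨T, hT, he⟩ := List.mem_flatten.mp hef
  exact h T hT e he

lemma projDB_entries_nonneg {DB : UDB I} (hp : ∀ S ∈ DB, ∀ e ∈ S, 0 ≤ e.2) (γ : List I) :
    ∀ T ∈ projDB γ DB, ∀ e ∈ T, 0 ≤ e.2 := by
  intro T hT e he
  obtain ⟨S, hS, hTS⟩ := List.mem_filterMap.mp hT
  exact hp S hS e ((projSeq_sublist γ S T hTS).subset he)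

lemma maxPrDB_nonneg {DB : UDB I} (hp : ∀ S ∈ DB, ∀ e ∈ S, 0 ≤ e.2) (γ : List I) :
    0 ≤ maxPrDB DB γ :=
  Finset.prod_nonneg fun k _ => Phat_nonneg (projDB_entries_nonneg hp _) _

lemma occ_prod_le_maxPrDB {DB : UDB I} (hp : ∀ S ∈ DB, ∀ e ∈ S, 0 ≤ e.2)
    {S o : USeq I} {γ : List I} (hS : S ∈ DB) (ho : o.Sublist S) (hm : o.map Prod.fst = γ) :
    (o.map Prod.snd).prod ≤ maxPrDB DB γ := by
  have hlen : o.length = γ.length := by rw [← hm, List.length_map]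
  have h1 : o.map Prod.snd
      = List.ofFn (fun k : Fin γ.length => (o[(k : ℕ)]'(by omega)).2) := by
    apply List.ext_getElem
    · simp [hlen]
    · intro j hj1 hj2
      simp
  rw [h1, List.prod_ofFn]
  unfold maxPrDB
  apply Finset.prod_le_prod
  · intro k _
    exact hp S hS _ (ho.subset (o.getElem_mem _))
  · intro k _
    have hk : (k : ℕ) < o.length := by omega
    obtain ⟨T, hT, hsub⟩ := projSeq_key (γ.take k) S (γ.drop k) o ho
      (by rw [hm, List.take_append_drop])
    have hTD : T ∈ projDB (γ.take k) DB := List.mem_filterMap.mpr ⟨S, hS, hT⟩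
    have hlen' : (γ.take (k : ℕ)).length = (k : ℕ) := by
      exact List.length_take_of_le k.isLt.le
    rw [hlen'] at hsub
    have hmem : o[(k : ℕ)]'hk ∈ T := by
      apply hsub.subset
      rw [List.drop_eq_getElem_cons hk]
      exact List.mem_cons_self
    have hfst : (o[(k : ℕ)]'hk).1 = γ.get k := by
      have h2 : (o.map Prod.fst)[(k : ℕ)]'(by simp [hlen]) = γ[(k : ℕ)] :=
        List.getElem_of_eq hm _
      simpa using h2
    calc (o[(k : ℕ)]'hk).2 ≤ Phat (projDB (γ.take k) DB) (o[(k : ℕ)]'hk).1 :=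
          le_Phat hTD hmem
      _ = _ := by rw [hfst]

lemma maxPrS_le_cap {DB : UDB I} (hp : ∀ S ∈ DB, ∀ e ∈ S, e.2 ∈ Set.Icc (0:ℝ) 1)
    {S : USeq I} (hS : S ∈ DB) (γ : List I) (i : I) (β : List I) :
    maxPrS (γ ++ i :: β) S ≤ maxPrDB DB γ * ((projSeq γ S).elim 0 (maxPrS [i])) := by
  have hp0 : ∀ S ∈ DB, ∀ e ∈ S, 0 ≤ e.2 := fun S hS e he => (hp S hS e he).1
  have hA0 : 0 ≤ maxPrDB DB γ := maxPrDB_nonneg hp0 γ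
  have hrhs0 : 0 ≤ (projSeq γ S).elim 0 (maxPrS [i]) := by
    cases hPS : projSeq γ S with
    | none => simp
    | some T =>
      simp only [Option.elim]
      exact maxPrS_nonneg (fun e he => hp0 S hS e ((projSeq_sublist γ S T hPS).subset he))
  apply maxPrS_le (mul_nonneg hA0 hrhs0)
  intro o ho hm
  have hlen : o.length = γ.length + (β.length + 1) := by
    have := congrArg List.length hm
    simp at this
    omega
  have hn : γ.length < o.length := by omega
  obtain ⟨T, hT, hsub⟩ := projSeq_key γ S (i :: β) o ho hm
  rw [hT]
  simp only [Option.elim]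
  have hsplit : o = o.take γ.length ++ (o[γ.length]'hn) :: o.drop (γ.length + 1) := by
    conv_lhs => rw [← List.take_append_drop γ.length o]
    rw [List.drop_eq_getElem_cons hn]
  have hprod : (o.map Prod.snd).prod
      = ((o.take γ.length).map Prod.snd).prod *
        ((o[γ.length]'hn).2 * ((o.drop (γ.length + 1)).map Prod.snd).prod) := by
    conv_lhs => rw [hsplit]
    rw [List.map_append, List.prod_append, List.map_cons, List.prod_cons]
  -- bound 1
  have htake_sub : (o.take γ.length).Sublist S := (List.take_sublist _ o).trans ho
  have htake_map : (o.take γ.length).map Prod.fst = γ := by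
    rw [List.map_take, hm]
    exact List.take_left
  have h1 : ((o.take γ.length).map Prod.snd).prod ≤ maxPrDB DB γ :=
    occ_prod_le_maxPrDB hp0 hS htake_sub htake_map
  have h1' : 0 ≤ ((o.take γ.length).map Prod.snd).prod := by
    refine List.prod_nonneg ?_
    intro a ha
    obtain ⟨e, he, rfl⟩ := List.mem_map.mp ha
    exact hp0 S hS e (htake_sub.subset he)
  -- bound 2
  have hfst : (o[γ.length]'hn).1 = i := by
    have h2 : (o.map Prod.fst)[γ.length]'(by simp; omega) = (γ ++ i :: β)[γ.length]'(by simp) :=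
      List.getElem_of_eq hm _
    simp only [List.getElem_map] at h2
    rw [List.getElem_append_right (le_refl γ.length)] at h2
    simpa using h2
  have hsing : ([o[γ.length]'hn] : USeq I).Sublist T := by
    refine List.Sublist.trans ?_ hsub
    rw [List.drop_eq_getElem_cons hn]
    exact List.cons_sublist_cons.mpr (List.nil_sublist _)
  have h2 : (o[γ.length]'hn).2 ≤ maxPrS [i] T := by
    have := le_maxPrS (α := [i]) hsing (by simp [hfst])
    simpa using this
  have hb0 : 0 ≤ (o[γ.length]'hn).2 := hp0 S hS _ (ho.subset (o.getElem_mem _))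
  have hB0 : 0 ≤ maxPrS [i] T := le_trans hb0 h2
  -- bound 3
  have h3 : 0 ≤ ((o.drop (γ.length + 1)).map Prod.snd).prod ∧
      ((o.drop (γ.length + 1)).map Prod.snd).prod ≤ 1 := by
    apply prod_Icc01
    intro x hx
    obtain ⟨e, he, rfl⟩ := List.mem_map.mp hx
    have heS : e ∈ S := ho.subset ((List.drop_sublist _ o).subset he)
    exact ⟨(hp S hS e heS).1, (hp S hS e heS).2⟩
  calc (o.map Prod.snd).prod
      = ((o.take γ.length).map Prod.snd).prod *
        ((o[γ.length]'hn).2 * ((o.drop (γ.length + 1)).map Prod.snd).prod) := hprod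
    _ ≤ maxPrDB DB γ * (maxPrS [i] T * 1) := by
        apply mul_le_mul h1 (mul_le_mul h2 h3.2 h3.1 hB0) (mul_nonneg hb0 h3.1) hA0
    _ = maxPrDB DB γ * maxPrS [i] T := by ring

lemma sum_elim_filterMap {A B : Type*} (f : A → Option B) (g : B → ℝ) :
    ∀ l : List A, ((l.filterMap f).map g).sum = (l.map fun a => (f a).elim 0 g).sum
  | [] => rfl
  | a :: l => by
    cases hfa : f a with
    | none => simp [List.filterMap_cons, hfa, sum_elim_filterMap f g l]
    | some b => simp [List.filterMap_cons, hfa, sum_elim_filterMap f g l]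

lemma expSup_le_expSupCap {DB : UDB I} (hp : ∀ S ∈ DB, ∀ e ∈ S, e.2 ∈ Set.Icc (0:ℝ) 1)
    (γ : List I) (i : I) (β : List I) :
    expSup DB (γ ++ i :: β) ≤ expSupCap DB (γ ++ [i]) := by
  have hcap : expSupCap DB (γ ++ [i])
      = maxPrDB DB γ * ((projDB γ DB).map fun S' => maxPrS [i] S').sum := by
    unfold expSupCap
    rw [List.getLast?_concat, List.dropLast_concat]
  rw [hcap]
  unfold expSup
  calc (DB.map fun S => maxPrS (γ ++ i :: β) S).sum
      ≤ (DB.map fun S => maxPrDB DB γ * ((projSeq γ S).elim 0 (maxPrS [i]))).sum :=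
        List.sum_le_sum (fun S hS => maxPrS_le_cap hp hS γ i β)
    _ = maxPrDB DB γ * (DB.map fun S => (projSeq γ S).elim 0 (maxPrS [i])).sum :=
        List.sum_map_mul_left _ _ _
    _ = _ := by
        rw [← sum_elim_filterMap (projSeq γ) (maxPrS [i]) DB]
        rfl

lemma sWeight_le_wgtCap {DB : UDB I} (w : I → ℝ) (hw : ∀ x : I, w x ∈ Set.Icc (0:ℝ) 1)
    (α β : List I) (hα : α ≠ []) (hβocc : ∀ i ∈ β, ItemOccursIn (projDB α DB) i) :
    sWeight w (α ++ β) ≤ wgtCap DB w α := by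
  have hlenpos : (0:ℝ) < ((α ++ β).length : ℝ) := by
    have h0 : 0 < (α ++ β).length := by
      cases α with
      | nil => exact absurd rfl hα
      | cons a l => simp
    exact_mod_cast h0
  unfold sWeight
  rw [div_le_iff₀ hlenpos]
  have hbound : ∀ x ∈ (α ++ β).map w, x ≤ wgtCap DB w α := by
    intro x hx
    obtain ⟨j, hj, rfl⟩ := List.mem_map.mp hx
    rcases List.mem_append.mp hj with hj | hj
    · refine le_trans ?_ (le_max_right _ _)
      exact le_unbot'_max (List.mem_map_of_mem (f := w) hj)
    · refine le_trans ?_ (le_max_left _ _)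
      obtain ⟨S'', hS'', hjS⟩ := hβocc j hj
      obtain ⟨S, hS, hproj⟩ := List.mem_filterMap.mp hS''
      have hαeq := List.dropLast_append_getLast hα
      rw [← hαeq, projSeq_append] at hproj
      cases hT : projSeq α.dropLast S with
      | none => rw [hT] at hproj; simp at hproj
      | some T =>
        rw [hT] at hproj
        rw [Option.bind_some] at hproj
        have hsub := projSeq_sublist _ T S'' hproj
        obtain ⟨e, he, hej⟩ := List.mem_map.mp hjS
        apply le_unbot'_max
        apply List.mem_map.mpr
        exact ⟨e, List.mem_flatten.mpr ⟨T, List.mem_filterMap.mpr ⟨S, hS, hT⟩,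
          hsub.subset he⟩, by rw [hej]⟩
  calc ((α ++ β).map w).sum ≤ ((α ++ β).map w).length • wgtCap DB w α :=
        List.sum_le_card_nsmul _ _ hbound
    _ = wgtCap DB w α * ((α ++ β).length : ℝ) := by
        rw [List.length_map, nsmul_eq_mul]
        ring

end Helpers

/-- Lemma 5: if all probabilities lie in `[0,1]`, all weights lie in `[0,1]`, `α` is
nonempty and every item of `β` occurs in some sequence of `DB|α`, then
`wExpSup^cap(α) < minWES` implies `WES(α ++ β) < minWES`. -/
theorem WES_lt_of_wExpSupCap_lt [DecidableEq I]
    (DB : UDB I) (hp : ∀ S ∈ DB, ∀ e ∈ S, e.2 ∈ Set.Icc (0 : ℝ) 1)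
    (w : I → ℝ) (hw : ∀ x : I, w x ∈ Set.Icc (0 : ℝ) 1)
    (minWES : ℝ) (α β : List I) (hα : α ≠ [])
    (hβocc : ∀ i ∈ β, ItemOccursIn (projDB α DB) i)
    (hlt : wExpSupCap DB w α < minWES) :
    WES DB w (α ++ β) < minWES := by
  have hp0 : ∀ S ∈ DB, ∀ e ∈ S, 0 ≤ e.2 := fun S hS e he => (hp S hS e he).1
  obtain ⟨γ, i, rfl⟩ : ∃ γ i, α = γ ++ [i] :=
    ⟨α.dropLast, α.getLast hα, (List.dropLast_append_getLast hα).symm⟩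
  refine lt_of_le_of_lt ?_ hlt
  have hcons : γ ++ [i] ++ β = γ ++ i :: β := by simp
  have h1 : expSup DB (γ ++ [i] ++ β) ≤ expSupCap DB (γ ++ [i]) := by
    rw [hcons]
    exact expSup_le_expSupCap hp γ i β
  have h2 : sWeight w ((γ ++ [i]) ++ β) ≤ wgtCap DB w (γ ++ [i]) :=
    sWeight_le_wgtCap w hw (γ ++ [i]) β (by simp) hβocc
  have hE0 : 0 ≤ expSup DB (γ ++ [i] ++ β) := by
    refine List.sum_nonneg ?_
    intro x hx
    obtain ⟨S, hS, rfl⟩ := List.mem_map.mp hx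
    exact maxPrS_nonneg (hp0 S hS)
  have hs0 : 0 ≤ sWeight w ((γ ++ [i]) ++ β) := by
    unfold sWeight
    refine div_nonneg ?_ (by positivity)
    refine List.sum_nonneg ?_
    intro x hx
    obtain ⟨j, _, rfl⟩ := List.mem_map.mp hx
    exact (hw j).1
  have hC0 : 0 ≤ expSupCap DB (γ ++ [i]) := hE0.trans h1
  unfold WES wExpSupCap
  exact mul_le_mul h1 h2 hs0 hC0
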